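/- Sub-homogeneity of the Riccati-type operator: for every scalar β > 1, every n_x×n_x positive semidefinite symmetric matrix X, every λ ∈ [0,1], φ ∈ [0,1] and α > 0, one has 𝒳_λ(βX, α, φ) ⪯ β 𝒳_λ(X, α, φ). -/

import Mathlib

open Matrix

/-- The Riccati-type operator 𝒳_λ(X, α, φ). -/
noncomputable def calX {nx ny : ℕ} (A : Matrix (Fin nx) (Fin nx) ℝ)
    (L : Matrix (Fin ny) (Fin nx) ℝ) (Q : Matrix (Fin nx) (Fin nx) ℝ)
    (R : Matrix (Fin ny) (Fin ny) ℝ) (lam : ℝ) (X : Matrix (Fin nx) (Fin nx) ℝ)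
    (al phi : ℝ) : Matrix (Fin nx) (Fin nx) ℝ :=
  (1 - lam * phi) • (A * X * Aᵀ + al • Q) +
    (lam * phi) •
      (A * X * Aᵀ + al • Q - A * X * Lᵀ * (L * X * Lᵀ + al • R)⁻¹ * (L * X * Aᵀ))

/-- Loewner order: `X ⪯ Y` iff `Y - X` is positive semidefinite. -/
def loewnerLE {nx : ℕ} (X Y : Matrix (Fin nx) (Fin nx) ℝ) : Prop :=
  (Y - X).PosSemidef

lemma psd_smul' {n : ℕ} {c : ℝ} {X : Matrix (Fin n) (Fin n) ℝ}
    (hc : 0 ≤ c) (hX : X.PosSemidef) : (c • X).PosSemidef := by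
  constructor
  · unfold Matrix.IsHermitian
    rw [conjTranspose_smul, star_trivial, hX.1.eq]
  · intro x
    simpa [Finsupp.mul_sum, mul_assoc, mul_left_comm] using mul_nonneg hc (hX.2 x)

lemma pd_smul' {n : ℕ} {c : ℝ} {X : Matrix (Fin n) (Fin n) ℝ}
    (hc : 0 < c) (hX : X.PosDef) : (c • X).PosDef := by
  constructor
  · unfold Matrix.IsHermitian
    rw [conjTranspose_smul, star_trivial, hX.1.eq]
  · intro x hx
    simpa [Finsupp.mul_sum, mul_assoc, mul_left_comm] using mul_pos hc (hX.2 hx)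

lemma inv_sub_inv_psd {n : ℕ} {P Q : Matrix (Fin n) (Fin n) ℝ}
    (hP : P.PosDef) (hQ : Q.PosDef) (h : (Q - P).PosSemidef) :
    (P⁻¹ - Q⁻¹).PosSemidef := by
  have hPd : IsUnit P.det := hP.det_pos.ne'.isUnit
  have hQd : IsUnit Q.det := hQ.det_pos.ne'.isUnit
  have e1 : Q⁻¹ * (Q - P) * P⁻¹ = P⁻¹ - Q⁻¹ := by
    rw [Matrix.mul_sub, Matrix.sub_mul, Matrix.nonsing_inv_mul _ hQd, Matrix.one_mul,
      Matrix.mul_assoc, Matrix.mul_nonsing_inv _ hPd, Matrix.mul_one]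
  have e1' : P⁻¹ * (Q - P) * Q⁻¹ = P⁻¹ - Q⁻¹ := by
    rw [Matrix.mul_sub, Matrix.sub_mul, Matrix.nonsing_inv_mul _ hPd,
      Matrix.mul_assoc, Matrix.mul_nonsing_inv _ hQd, Matrix.mul_one, Matrix.one_mul]
  have e2 : P⁻¹ - Q⁻¹ =
      Q⁻¹ * (Q - P) * Q⁻¹ + (Q⁻¹ * (Q - P)) * P⁻¹ * ((Q - P) * Q⁻¹) := by
    have h3 : (Q⁻¹ * (Q - P)) * P⁻¹ * ((Q - P) * Q⁻¹)
        = (P⁻¹ - Q⁻¹) * ((Q - P) * Q⁻¹) := by rw [← e1]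
    rw [h3, Matrix.sub_mul]
    rw [← Matrix.mul_assoc, ← Matrix.mul_assoc, e1']
    abel
  rw [e2]
  have hQinvH : Q⁻¹ᴴ = Q⁻¹ := hQ.inv.isHermitian.eq
  have t1 : (Q⁻¹ * (Q - P) * Q⁻¹).PosSemidef := by
    have := h.mul_mul_conjTranspose_same Q⁻¹
    rwa [hQinvH] at this
  have t2 : ((Q⁻¹ * (Q - P)) * P⁻¹ * ((Q - P) * Q⁻¹)).PosSemidef := by
    have := hP.inv.posSemidef.mul_mul_conjTranspose_same (Q⁻¹ * (Q - P))
    rwa [conjTranspose_mul, hQinvH, h.1.eq] at this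
  exact t1.add t2



theorem stmt_2 {nx ny : ℕ} (hnx : 0 < nx) (hny : 0 < ny)
    (A : Matrix (Fin nx) (Fin nx) ℝ) (L : Matrix (Fin ny) (Fin nx) ℝ)
    (Q : Matrix (Fin nx) (Fin nx) ℝ) (R : Matrix (Fin ny) (Fin ny) ℝ)
    (hQ : Q.PosDef) (hR : R.PosDef)
    (β : ℝ) (hβ : 1 < β)
    (X : Matrix (Fin nx) (Fin nx) ℝ) (hX : X.PosSemidef)
    (lam phi al : ℝ) (hlam : lam ∈ Set.Icc (0 : ℝ) 1)
    (hphi : phi ∈ Set.Icc (0 : ℝ) 1) (hal : 0 < al) :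
    loewnerLE (calX A L Q R lam (β • X) al phi) (β • calX A L Q R lam X al phi) := by
  have hβ0 : (0:ℝ) < β := lt_trans one_pos hβ
  have hKey : β • calX A L Q R lam X al phi - calX A L Q R lam (β • X) al phi
      = ((β - 1) * al) • Q + (lam * phi * β) •
        ((A * X * Lᵀ) * (β • (β • (L * X * Lᵀ) + al • R)⁻¹ - (L * X * Lᵀ + al • R)⁻¹)
          * (L * X * Aᵀ)) := by
    simp only [calX, Matrix.mul_smul, Matrix.smul_mul, Matrix.mul_sub, Matrix.sub_mul]
    module
  -- basic positivity facts
  have hLXL : (L * X * Lᵀ).PosSemidef := by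
    have := hX.mul_mul_conjTranspose_same L
    rwa [conjTranspose_eq_transpose_of_trivial] at this
  have halR : (al • R).PosDef := pd_smul' hal hR
  have hM : (L * X * Lᵀ + al • R).PosDef := Matrix.PosDef.posSemidef_add hLXL halR
  have hN : (β • (L * X * Lᵀ) + al • R).PosDef :=
    Matrix.PosDef.posSemidef_add (psd_smul' hβ0.le hLXL) halR
  -- the middle matrix is PSD
  have hNs : (β⁻¹ • (β • (L * X * Lᵀ) + al • R)).PosDef :=
    pd_smul' (inv_pos.mpr hβ0) hN
  have hdiff : ((L * X * Lᵀ + al • R) - β⁻¹ • (β • (L * X * Lᵀ) + al • R)).PosSemidef := by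
    have heq : (L * X * Lᵀ + al • R) - β⁻¹ • (β • (L * X * Lᵀ) + al • R)
        = ((1 - β⁻¹) * al) • R := by
      rw [smul_add, smul_smul, inv_mul_cancel₀ hβ0.ne', one_smul]
      module
    rw [heq]
    have hbi : β⁻¹ < 1 := inv_lt_one_of_one_lt₀ hβ
    exact psd_smul' (mul_nonneg (by linarith) hal.le) hR.posSemidef
  have hinv : (β⁻¹ • (β • (L * X * Lᵀ) + al • R))⁻¹ = β • (β • (L * X * Lᵀ) + al • R)⁻¹ := by
    apply Matrix.inv_eq_right_inv
    rw [Matrix.smul_mul, Matrix.mul_smul, smul_smul, inv_mul_cancel₀ hβ0.ne',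
      Matrix.mul_nonsing_inv _ hN.det_pos.ne'.isUnit, one_smul]
  have hC : (β • (β • (L * X * Lᵀ) + al • R)⁻¹ - (L * X * Lᵀ + al • R)⁻¹).PosSemidef := by
    have := inv_sub_inv_psd hNs hM hdiff
    rwa [hinv] at this
  have hXt : Xᵀ = X := by
    have := hX.1.eq
    rwa [conjTranspose_eq_transpose_of_trivial] at this
  have hKt : (A * X * Lᵀ)ᴴ = L * X * Aᵀ := by
    simp [conjTranspose_eq_transpose_of_trivial, Matrix.transpose_mul, Matrix.mul_assoc, hXt]
  have hconj := hC.mul_mul_conjTranspose_same (A * X * Lᵀ)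
  rw [hKt] at hconj
  unfold loewnerLE
  rw [hKey]
  exact (psd_smul' (mul_nonneg (by linarith) hal.le) hQ.posSemidef).add
    (psd_smul' (mul_nonneg (mul_nonneg hlam.1 hphi.1) hβ0.le) hconj)
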